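/- arXiv:1801.03216 — 3 statements merged into one kernel-verified Lean document; each statement's English description precedes it below -/
import Mathlib

section
/- For the sets C₁, C₂, C₃ in ℝ³ defined from any admissible sequence (t_k), there exist strictly decreasing sequences (ε_j) and (ε'_j) in (0,1) with ε_j → 0 and ε'_j → 0 such that for every j, the third coordinate of each of the three components of the unique ε_j-cycle for (C₁,C₂,C₃) equals 1, and the third coordinate of each of the three components of the unique ε'_j-cycle equals −1. -/
noncomputable section
open Real Filter

/-- ℝ³ with the Euclidean structure. -/
abbrev E3 : Type := EuclideanSpace ℝ (Fin 3)
/-- ℝ² with the Euclidean structure. -/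
abbrev E2 : Type := EuclideanSpace ℝ (Fin 2)

/-- The real inner product. -/
def ip {E : Type} [NormedAddCommGroup E] [InnerProductSpace ℝ E] (x y : E) : ℝ :=
  inner ℝ x y

/-- `w` is the metric projection of `u` onto `C`, characterised by membership
together with the variational inequality `⟪v - w, u - w⟫ ≤ 0` for all `v ∈ C`. -/
def IsProj {E : Type} [NormedAddCommGroup E] [InnerProductSpace ℝ E]
    (C : Set E) (u w : E) : Prop :=
  w ∈ C ∧ ∀ v ∈ C, inner ℝ (v - w) (u - w) ≤ (0 : ℝ)

/-- `(u₁,u₂,u₃)` is an ε-cycle for `(C₁,C₂,C₃)` with support `(w₁,w₂,w₃)`. -/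
def IsCycleWithSupport {E : Type} [NormedAddCommGroup E] [InnerProductSpace ℝ E]
    (C₁ C₂ C₃ : Set E) (ε : ℝ) (u₁ u₂ u₃ w₁ w₂ w₃ : E) : Prop :=
  IsProj C₁ u₃ w₁ ∧ IsProj C₂ u₁ w₂ ∧ IsProj C₃ u₂ w₃ ∧
    u₁ = u₃ + ε • (w₁ - u₃) ∧ u₂ = u₁ + ε • (w₂ - u₁) ∧ u₃ = u₂ + ε • (w₃ - u₂)

/-- `(u₁,u₂,u₃)` is an ε-cycle for `(C₁,C₂,C₃)`. -/
def IsCycle {E : Type} [NormedAddCommGroup E] [InnerProductSpace ℝ E]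
    (C₁ C₂ C₃ : Set E) (ε : ℝ) (u₁ u₂ u₃ : E) : Prop :=
  ∃ w₁ w₂ w₃ : E, IsCycleWithSupport C₁ C₂ C₃ ε u₁ u₂ u₃ w₁ w₂ w₃

/-- An admissible sequence: strictly increasing (on indices `k ≥ 1`), starting
at `t₁ = π/4` and converging to `π/2`. -/
def Admissible (t : ℕ → ℝ) : Prop :=
  StrictMonoOn t (Set.Ici 1) ∧ t 1 = π / 4 ∧ Tendsto t atTop (nhds (π / 2))

/-- The segment C₁ = co{(−2,2,1), (−2,2,−1)}. -/
def C1 : Set E3 := convexHull ℝ {!₂[(-2 : ℝ), 2, 1], !₂[(-2 : ℝ), 2, -1]}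

/-- The segment C₂ = co{(2,2,1), (2,2,−1)}. -/
def C2 : Set E3 := convexHull ℝ {!₂[(2 : ℝ), 2, 1], !₂[(2 : ℝ), 2, -1]}

/-- The points pₖ = (cos tₖ, sin tₖ, (−1)ᵏ). -/
def pSeq (t : ℕ → ℝ) (k : ℕ) : E3 := !₂[Real.cos (t k), Real.sin (t k), (-1 : ℝ) ^ k]

/-- C₃ = closed convex hull of {pₖ : k ≥ 1}. -/
def C3 (t : ℕ → ℝ) : Set E3 := closure (convexHull ℝ (pSeq t '' {k | 1 ≤ k}))

/-- a = (−2,2). -/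
def aPt : E2 := !₂[(-2 : ℝ), 2]
/-- b = (2,2). -/
def bPt : E2 := !₂[(2 : ℝ), 2]
/-- vₖ = (cos tₖ, sin tₖ). -/
def vSeq (t : ℕ → ℝ) (k : ℕ) : E2 := !₂[Real.cos (t k), Real.sin (t k)]
/-- C₁' = {a}. -/
def C1' : Set E2 := {aPt}
/-- C₂' = {b}. -/
def C2' : Set E2 := {bPt}
/-- C₃' = closed convex hull of {vₖ : k ≥ 1}. -/
def C3' (t : ℕ → ℝ) : Set E2 := closure (convexHull ℝ (vSeq t '' {k | 1 ≤ k}))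

/-- Projection of ℝ³ onto the xy-plane. -/
def projXY (x : E3) : E2 := !₂[x 0, x 1]

/-- Lifting a point of the xy-plane to height `z`. -/
def liftZ (p : E2) (z : ℝ) : E3 := !₂[p 0, p 1, z]

/-- The solid cylinder D. -/
def Dcyl : Set E3 := {x | x 0 ^ 2 + x 1 ^ 2 ≤ 1 ∧ |x 2| ≤ 1}

/-! ### Auxiliary lemmas -/

section Aux

lemma t_ge (t : ℕ → ℝ) (ht : Admissible t) {k : ℕ} (hk : 1 ≤ k) : π/4 ≤ t k := by
  rcases eq_or_lt_of_le hk with h | h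
  · rw [← h]; exact le_of_eq ht.2.1.symm
  · rw [← ht.2.1]; exact le_of_lt (ht.1 (Set.mem_Ici.2 le_rfl) (Set.mem_Ici.2 hk) h)

lemma t_gt (t : ℕ → ℝ) (ht : Admissible t) {k : ℕ} (hk : 2 ≤ k) : π/4 < t k := by
  rw [← ht.2.1]; exact ht.1 (Set.mem_Ici.2 le_rfl) (Set.mem_Ici.2 (by omega)) (by omega)

lemma t_le_lim (t : ℕ → ℝ) (ht : Admissible t) {k : ℕ} (hk : 1 ≤ k) : t k ≤ π/2 := by
  refine ge_of_tendsto ht.2.2 ?_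
  refine eventually_atTop.2 ⟨k, fun m hm => ?_⟩
  exact ht.1.monotoneOn (Set.mem_Ici.2 hk) (Set.mem_Ici.2 (le_trans hk hm)) hm

lemma t_lt (t : ℕ → ℝ) (ht : Admissible t) {k : ℕ} (hk : 1 ≤ k) : t k < π/2 := by
  have h1 : t k < t (k+1) := ht.1 (Set.mem_Ici.2 hk) (Set.mem_Ici.2 (by omega)) (by omega)
  have h2 := t_le_lim t ht (k := k+1) (by omega)
  linarith

lemma firm {E : Type} [NormedAddCommGroup E] [InnerProductSpace ℝ E]
    {C : Set E} {x y w w' : E} (hx : IsProj C x w) (hy : IsProj C y w') :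
    ‖w - w'‖^2 ≤ (inner ℝ (w - w') (x - y) : ℝ) := by
  have h1 : (inner ℝ (w' - w) (x - w) : ℝ) ≤ 0 := hx.2 w' hy.1
  have h2 : (inner ℝ (w - w') (y - w') : ℝ) ≤ 0 := hy.2 w hx.1
  have h3 : (inner ℝ (w - w') (x - w) : ℝ) = - inner ℝ (w' - w) (x - w) := by
    rw [← inner_neg_left]; congr 1; abel
  have hd : x - y = (x - w) - (y - w') + (w - w') := by abel
  rw [hd, inner_add_right, inner_sub_right, real_inner_self_eq_norm_sq]
  linarith

lemma real_aux {ε A B C : ℝ} (hε0 : 0 < ε) (hε1 : ε < 1) (hBA : B ≤ A) (hCA : C ≤ A)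
    (heq : (1-ε)^2*A + 2*ε*(1-ε)*B + ε^2*C = A) : B = A ∧ C = A := by
  have h1 : 0 < ε * (1 - ε) := mul_pos hε0 (by linarith)
  constructor
  · nlinarith [mul_nonneg (sq_nonneg ε) (sub_nonneg.2 hCA), mul_nonneg h1.le (sub_nonneg.2 hBA)]
  · nlinarith [mul_nonneg (sq_nonneg ε) (sub_nonneg.2 hCA), mul_nonneg h1.le (sub_nonneg.2 hBA),
      sq_nonneg ε, mul_pos hε0 hε0]

section step
variable {E : Type} [NormedAddCommGroup E] [InnerProductSpace ℝ E]
  {C : Set E} {ε : ℝ} {x y w w' : E}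

lemma step_norm (ε : ℝ) (x y w w' : E) :
    ‖(x + ε • (w - x)) - (y + ε • (w' - y))‖^2
      = (1-ε)^2 * ‖x - y‖^2 + 2*ε*(1-ε) * (inner ℝ (w - w') (x - y) : ℝ)
        + ε^2 * ‖w - w'‖^2 := by
  have hd : (x + ε • (w - x)) - (y + ε • (w' - y))
      = (1-ε) • (x - y) + ε • (w - w') := by module
  rw [hd, norm_add_sq_real, norm_smul, norm_smul, real_inner_smul_left,
    real_inner_smul_right, real_inner_comm, Real.norm_eq_abs, Real.norm_eq_abs,
    mul_pow, mul_pow, sq_abs, sq_abs]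
  ring

lemma aux_ineq (hx : IsProj C x w) (hy : IsProj C y w') :
    (inner ℝ (w - w') (x - y) : ℝ) ≤ ‖x - y‖^2 ∧ ‖w - w'‖^2 ≤ ‖x - y‖^2 := by
  have hf := firm hx hy
  have hc : (inner ℝ (w - w') (x - y) : ℝ) ≤ ‖w - w'‖ * ‖x - y‖ := real_inner_le_norm _ _
  have hn : ‖w - w'‖ ≤ ‖x - y‖ := by
    rcases eq_or_lt_of_le (norm_nonneg (w - w')) with h | h
    · rw [← h]; exact norm_nonneg _
    · nlinarith
  constructor
  · nlinarith [norm_nonneg (x - y)]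
  · nlinarith [norm_nonneg (w - w'), norm_nonneg (x - y)]

lemma step_le (hε0 : 0 < ε) (hε1 : ε < 1)
    (hx : IsProj C x w) (hy : IsProj C y w') :
    ‖(x + ε • (w - x)) - (y + ε • (w' - y))‖^2 ≤ ‖x - y‖^2 := by
  obtain ⟨hB, hC⟩ := aux_ineq hx hy
  rw [step_norm]
  nlinarith [mul_nonneg (sq_nonneg ε) (sub_nonneg.2 hC),
    mul_nonneg (mul_pos hε0 (by linarith : (0:ℝ) < 1 - ε)).le (sub_nonneg.2 hB)]

lemma step_eq (hε0 : 0 < ε) (hε1 : ε < 1)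
    (hx : IsProj C x w) (hy : IsProj C y w')
    (heq : ‖(x + ε • (w - x)) - (y + ε • (w' - y))‖^2 = ‖x - y‖^2) :
    w - w' = x - y := by
  obtain ⟨hB, hC⟩ := aux_ineq hx hy
  have hf := firm hx hy
  rw [step_norm] at heq
  obtain ⟨hBA, hCA⟩ := real_aux hε0 hε1 hB hC heq
  have hz : ‖(w - w') - (x - y)‖^2 = 0 := by
    rw [norm_sub_sq_real, hCA, hBA]; ring
  have hz' : ‖(w - w') - (x - y)‖ = 0 := by
    have := norm_nonneg ((w - w') - (x - y)); nlinarith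
  exact sub_eq_zero.1 (norm_eq_zero.1 hz')
end step

lemma inner3 (x y : E3) : (inner ℝ x y : ℝ) = x 0 * y 0 + x 1 * y 1 + x 2 * y 2 := by
  simp [PiLp.inner_apply, Fin.sum_univ_three, RCLike.inner_apply, mul_comm]

lemma mem_seg {P Q : E3} {v : E3} (h : v ∈ convexHull ℝ {P, Q})
    {i : Fin 3} {r : ℝ} (hP : P i = r) (hQ : Q i = r) : v i = r := by
  have hconv : Convex ℝ {v : E3 | v i = r} := by
    intro x hx y hy α β hα hβ hαβ
    simp only [Set.mem_setOf_eq] at hx hy ⊢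
    simp [hx, hy, ← add_mul, hαβ]
  exact convexHull_min (by rintro v (rfl | rfl) <;> simp [hP, hQ]) hconv h

lemma C3_halfspace (t : ℕ → ℝ) (d : E3) (r : ℝ)
    (h : ∀ k, 1 ≤ k → (inner ℝ (pSeq t k) d : ℝ) ≤ r) :
    ∀ x ∈ C3 t, (inner ℝ x d : ℝ) ≤ r := by
  have hcont : Continuous fun x : E3 => (inner ℝ x d : ℝ) :=
    Continuous.inner continuous_id continuous_const
  have hcl : IsClosed {x : E3 | (inner ℝ x d : ℝ) ≤ r} := isClosed_le hcont continuous_const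
  have hconv : Convex ℝ {x : E3 | (inner ℝ x d : ℝ) ≤ r} :=
    convex_halfSpace_le ⟨fun a b => inner_add_left a b d, fun c a => real_inner_smul_left a d c⟩ r
  intro x hx
  refine closure_minimal (convexHull_min ?_ hconv) hcl hx
  rintro v ⟨k, hk, rfl⟩
  exact h k hk

end Aux
section Fiber

lemma neg_one_sq_pow (k : ℕ) : ((-1:ℝ))^k * (-1)^k = 1 := by
  rw [← pow_add]; exact Even.neg_one_pow ⟨k, rfl⟩

lemma neg_one_pow_mul_le (m k : ℕ) : ((-1:ℝ))^m * (-1)^k ≤ 1 ∧ (-1:ℝ) ≤ ((-1:ℝ))^m * (-1)^k := by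
  rcases neg_one_pow_eq_or ℝ m with h1 | h1 <;> rcases neg_one_pow_eq_or ℝ k with h2 | h2 <;>
    rw [h1, h2] <;> norm_num

/-- Points of `C3 t` lying over the planar vertex `v_k` have third coordinate `(-1)^k`. -/
lemma fiber (t : ℕ → ℝ) (ht : Admissible t) {k : ℕ} (hk : 2 ≤ k) {x : E3}
    (hx : x ∈ C3 t) (h0 : x 0 = Real.cos (t k)) (h1 : x 1 = Real.sin (t k)) :
    x 2 = (-1)^k := by
  set c := Real.cos (t k) with hc
  set s := Real.sin (t k) with hs
  set δ : ℝ := min (t k - t (k-1)) (t (k+1) - t k) with hδdef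
  have hk1 : (1:ℕ) ≤ k := by omega
  have hmono := ht.1
  have hδ0 : 0 < δ := by
    apply lt_min
    · have : t (k-1) < t k := hmono (Set.mem_Ici.2 (by omega)) (Set.mem_Ici.2 hk1) (by omega)
      linarith
    · have : t k < t (k+1) := hmono (Set.mem_Ici.2 hk1) (Set.mem_Ici.2 (by omega)) (by omega)
      linarith
  have hδπ : δ < π := by
    have h2 := t_lt t ht (k := k+1) (by omega)
    have h3 := t_ge t ht (k := k) hk1
    have := Real.pi_pos
    calc δ ≤ t (k+1) - t k := min_le_right _ _
    _ < π := by linarith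
  have hγ : Real.cos δ < 1 := by
    have := Real.cos_lt_cos_of_nonneg_of_le_pi le_rfl hδπ.le hδ0
    simpa using this
  -- the key bound: for m ≠ k, cos (t m - t k) ≤ cos δ
  have hbound : ∀ m, 1 ≤ m → m ≠ k → Real.cos (t m - t k) ≤ Real.cos δ := by
    intro m hm hmk
    have hmlo := t_ge t ht hm
    have hmhi := t_lt t ht hm
    have hklo := t_ge t ht hk1
    have hkhi := t_lt t ht hk1
    rcases lt_or_gt_of_ne hmk with hlt | hgt
    · -- m < k : t m ≤ t (k-1)
      have hmk1 : t m ≤ t (k-1) :=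
        hmono.monotoneOn (Set.mem_Ici.2 hm) (Set.mem_Ici.2 (by omega)) (by omega)
      have hge : δ ≤ t k - t m := le_trans (min_le_left _ _) (by linarith)
      have : Real.cos (t k - t m) ≤ Real.cos δ :=
        Real.cos_le_cos_of_nonneg_of_le_pi hδ0.le (by linarith [Real.pi_pos]) hge
      rwa [← Real.cos_neg, neg_sub] at this
    · -- m > k : t (k+1) ≤ t m
      have hmk1 : t (k+1) ≤ t m :=
        hmono.monotoneOn (Set.mem_Ici.2 (by omega)) (Set.mem_Ici.2 hm) (by omega)
      have hge : δ ≤ t m - t k := le_trans (min_le_right _ _) (by linarith)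
      exact Real.cos_le_cos_of_nonneg_of_le_pi hδ0.le (by linarith [Real.pi_pos]) hge
  set s₀ : ℝ := (1 - Real.cos δ)/2 with hs₀def
  have hs₀ : 0 < s₀ := by simp only [hs₀def]; linarith
  have hpy : s^2 + c^2 = 1 := Real.sin_sq_add_cos_sq (t k)
  -- generator bounds for the two functionals
  have hgen : ∀ (σ : ℝ), σ = 1 ∨ σ = -1 → ∀ m, 1 ≤ m →
      (inner ℝ (pSeq t m) (!₂[c, s, σ * s₀ * (-1)^k] : E3) : ℝ) ≤ 1 + σ * s₀ := by
    intro σ hσ m hm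
    rw [inner3]
    simp only [pSeq]
    simp only [Matrix.cons_val_zero, Matrix.cons_val_one, Matrix.head_cons,
      Matrix.cons_val_two, Matrix.tail_cons]
    have hcs : Real.cos (t m) * c + Real.sin (t m) * s = Real.cos (t m - t k) := by
      rw [Real.cos_sub]; try ring
    rw [hcs]
    by_cases hmk : m = k
    · subst hmk
      rw [sub_self, Real.cos_zero]
      have h2 : ((-1:ℝ))^m * (σ * s₀ * (-1)^m) = σ * s₀ := by
        rw [show ((-1:ℝ))^m * (σ * s₀ * (-1)^m) = σ * s₀ * ((-1:ℝ)^m * (-1)^m) by ring,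
          neg_one_sq_pow, mul_one]
      rw [h2]
    · have hb := hbound m hm hmk
      obtain ⟨hle, hge⟩ := neg_one_pow_mul_le m k
      have heq2 : ((-1:ℝ))^m * (σ * s₀ * (-1)^k) = σ * (s₀ * ((-1:ℝ)^m * (-1)^k)) := by ring
      rw [heq2]
      have hub : s₀ * ((-1:ℝ)^m * (-1)^k) ≤ s₀ * 1 := by
        exact mul_le_mul_of_nonneg_left hle hs₀.le
      have hlb : s₀ * (-1:ℝ) ≤ s₀ * ((-1:ℝ)^m * (-1)^k) :=
        mul_le_mul_of_nonneg_left hge hs₀.le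
      rcases hσ with h | h <;> rw [h] <;> simp only [hs₀def] at * <;> nlinarith [hb, hγ]
  -- apply to x
  have happ : ∀ (σ : ℝ), σ = 1 ∨ σ = -1 →
      1 + σ * s₀ * ((-1:ℝ))^k * x 2 ≤ 1 + σ * s₀ := by
    intro σ hσ
    have := C3_halfspace t (!₂[c, s, σ * s₀ * (-1)^k] : E3) _ (hgen σ hσ) x hx
    rw [inner3] at this
    simp only [Matrix.cons_val_zero, Matrix.cons_val_one, Matrix.head_cons,
      Matrix.cons_val_two, Matrix.tail_cons] at this
    rw [h0, h1] at this
    calc 1 + σ * s₀ * ((-1:ℝ))^k * x 2 = c * c + s * s + x 2 * (σ * s₀ * (-1)^k) := by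
          rw [show c * c + s * s = s^2 + c^2 by ring, hpy]; ring
    _ ≤ _ := this
  have hA := happ 1 (Or.inl rfl)
  have hB := happ (-1) (Or.inr rfl)
  -- deduce (-1)^k * x 2 = 1
  have hkey : ((-1:ℝ))^k * x 2 = 1 := by
    nlinarith [hA, hB, hs₀]
  have := neg_one_sq_pow k
  calc x 2 = ((-1:ℝ)^k * (-1)^k) * x 2 := by rw [this]; ring
  _ = (-1)^k * ((-1)^k * x 2) := by ring
  _ = (-1)^k := by rw [hkey, mul_one]

end Fiber
section Main

lemma comb_apply (x y : E3) (r : ℝ) (i : Fin 3) :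
    (x + r • (y - x)) i = x i + r * (y i - x i) := by simp

lemma scalar_id0 (s c : ℝ) (hσ : s + c ≠ 0) (hd : 3*s^2 + c^2 ≠ 0) :
    (c*(1 + (4-2*s)*(s+c)/(3*s^2+c^2)) + (2*c/(s+c))*(c - c*(1 + (4-2*s)*(s+c)/(3*s^2+c^2)))
      + (2*c/(s+c))*((-2) - (c*(1 + (4-2*s)*(s+c)/(3*s^2+c^2)) + (2*c/(s+c))*(c - c*(1 + (4-2*s)*(s+c)/(3*s^2+c^2))))))
      + (2*c/(s+c))*(2 - (c*(1 + (4-2*s)*(s+c)/(3*s^2+c^2)) + (2*c/(s+c))*(c - c*(1 + (4-2*s)*(s+c)/(3*s^2+c^2)))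
      + (2*c/(s+c))*((-2) - (c*(1 + (4-2*s)*(s+c)/(3*s^2+c^2)) + (2*c/(s+c))*(c - c*(1 + (4-2*s)*(s+c)/(3*s^2+c^2)))))))
      = c*(1 + (4-2*s)*(s+c)/(3*s^2+c^2)) := by
  grind

lemma scalar_id1 (s c : ℝ) (hσ : s + c ≠ 0) (hd : 3*s^2 + c^2 ≠ 0) :
    (s*(1 + (4-2*s)*(s+c)/(3*s^2+c^2)) + (2*c/(s+c))*(s - s*(1 + (4-2*s)*(s+c)/(3*s^2+c^2)))
      + (2*c/(s+c))*(2 - (s*(1 + (4-2*s)*(s+c)/(3*s^2+c^2)) + (2*c/(s+c))*(s - s*(1 + (4-2*s)*(s+c)/(3*s^2+c^2))))))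
      + (2*c/(s+c))*(2 - (s*(1 + (4-2*s)*(s+c)/(3*s^2+c^2)) + (2*c/(s+c))*(s - s*(1 + (4-2*s)*(s+c)/(3*s^2+c^2)))
      + (2*c/(s+c))*(2 - (s*(1 + (4-2*s)*(s+c)/(3*s^2+c^2)) + (2*c/(s+c))*(s - s*(1 + (4-2*s)*(s+c)/(3*s^2+c^2)))))))
      = s*(1 + (4-2*s)*(s+c)/(3*s^2+c^2)) := by
  grind

set_option maxHeartbeats 2000000 in
/-- The main lemma: for `k ≥ 2` and `ε = 2cos t_k/(sin t_k + cos t_k)`, there is a unique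
ε-cycle, and it sits at height `(-1)^k`. -/
lemma main_cycle (t : ℕ → ℝ) (ht : Admissible t) {k : ℕ} (hk : 2 ≤ k) {ε : ℝ}
    (hεdef : ε = 2*Real.cos (t k)/(Real.sin (t k) + Real.cos (t k))) :
    (∃! u : E3 × E3 × E3, IsCycle C1 C2 (C3 t) ε u.1 u.2.1 u.2.2) ∧
    ∀ u₁ u₂ u₃ : E3, IsCycle C1 C2 (C3 t) ε u₁ u₂ u₃ →
      u₁ 2 = (-1)^k ∧ u₂ 2 = (-1)^k ∧ u₃ 2 = (-1)^k := by
  have hk1 : (1:ℕ) ≤ k := by omega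
  set c := Real.cos (t k) with hc
  set s := Real.sin (t k) with hs
  have htlo := t_gt t ht hk
  have hthi := t_lt t ht hk1
  have hπ := Real.pi_pos
  have hc0 : 0 < c := Real.cos_pos_of_mem_Ioo ⟨by linarith, hthi⟩
  have hcs : c < s := by
    have h1 : Real.sin (π/2 - t k) < Real.sin (t k) := by
      apply Real.strictMonoOn_sin ⟨by linarith, by linarith⟩ ⟨by linarith, by linarith⟩
      linarith
    rwa [Real.sin_pi_div_two_sub] at h1
  have hs1 : s ≤ 1 := Real.sin_le_one _
  have hσ0 : 0 < s + c := by linarith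
  have hσ : s + c ≠ 0 := ne_of_gt hσ0
  have hd0 : 0 < 3*s^2 + c^2 := by nlinarith
  have hd : 3*s^2 + c^2 ≠ 0 := ne_of_gt hd0
  have hε0 : 0 < ε := by rw [hεdef]; exact div_pos (by linarith) hσ0
  have hε1 : ε < 1 := by rw [hεdef, div_lt_one hσ0]; linarith
  set z : ℝ := (-1)^k with hz
  set K : ℝ := (4-2*s)*(s+c)/(3*s^2+c^2) with hK
  have hK0 : 0 ≤ K := by
    rw [hK]; exact div_nonneg (mul_nonneg (by linarith) hσ0.le) hd0.le
  -- the explicit cycle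
  set W1 : E3 := !₂[(-2:ℝ), 2, z] with hW1
  set W2 : E3 := !₂[(2:ℝ), 2, z] with hW2
  set W3 : E3 := pSeq t k with hW3
  set U2 : E3 := !₂[c*(1+K), s*(1+K), z] with hU2
  set U3 : E3 := U2 + ε • (W3 - U2) with hU3
  set U1 : E3 := U3 + ε • (W1 - U3) with hU1
  have hW1c : W1 0 = -2 ∧ W1 1 = 2 ∧ W1 2 = z := by
    refine ⟨?_, ?_, ?_⟩ <;> simp [hW1]
  have hW2c : W2 0 = 2 ∧ W2 1 = 2 ∧ W2 2 = z := by
    refine ⟨?_, ?_, ?_⟩ <;> simp [hW2]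
  have hW3c : W3 0 = c ∧ W3 1 = s ∧ W3 2 = z := by
    refine ⟨?_, ?_, ?_⟩ <;> simp [hW3, pSeq, ← hc, ← hs, ← hz]
  have hU2c : U2 0 = c*(1+K) ∧ U2 1 = s*(1+K) ∧ U2 2 = z := by
    refine ⟨?_, ?_, ?_⟩ <;> simp [hU2]
  have hU3c : U3 0 = U2 0 + ε*(c - U2 0) ∧ U3 1 = U2 1 + ε*(s - U2 1) ∧ U3 2 = z := by
    refine ⟨?_, ?_, ?_⟩ <;> rw [hU3, comb_apply]
    · rw [hW3c.1]
    · rw [hW3c.2.1]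
    · rw [hW3c.2.2, hU2c.2.2]; ring
  have hU1c : U1 0 = U3 0 + ε*(-2 - U3 0) ∧ U1 1 = U3 1 + ε*(2 - U3 1) ∧ U1 2 = z := by
    refine ⟨?_, ?_, ?_⟩ <;> rw [hU1, comb_apply]
    · rw [hW1c.1]
    · rw [hW1c.2.1]
    · rw [hW1c.2.2, hU3c.2.2]; ring
  -- z is ±1
  have hzpm : z = 1 ∨ z = -1 := neg_one_pow_eq_or ℝ k
  -- memberships
  have hW1mem : W1 ∈ C1 := by
    rcases hzpm with h | h <;> rw [hW1, h]
    · exact subset_convexHull ℝ _ (by left; rfl)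
    · exact subset_convexHull ℝ _ (by right; rfl)
  have hW2mem : W2 ∈ C2 := by
    rcases hzpm with h | h <;> rw [hW2, h]
    · exact subset_convexHull ℝ _ (by left; rfl)
    · exact subset_convexHull ℝ _ (by right; rfl)
  have hW3mem : W3 ∈ C3 t := by
    rw [hW3]
    exact subset_closure (subset_convexHull ℝ _ ⟨k, hk1, rfl⟩)
  -- IsProj C1 U3 W1
  have hP1 : IsProj C1 U3 W1 := by
    refine ⟨hW1mem, fun v hv => ?_⟩
    have hv0 : v 0 = -2 := mem_seg hv (by simp) (by simp)
    have hv1 : v 1 = 2 := mem_seg hv (by simp) (by simp)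
    rw [inner3]
    simp only [PiLp.sub_apply]
    rw [hv0, hv1, hU3c.2.2, hW1c.1, hW1c.2.1, hW1c.2.2]
    norm_num
  -- IsProj C2 U1 W2
  have hP2 : IsProj C2 U1 W2 := by
    refine ⟨hW2mem, fun v hv => ?_⟩
    have hv0 : v 0 = 2 := mem_seg hv (by simp) (by simp)
    have hv1 : v 1 = 2 := mem_seg hv (by simp) (by simp)
    rw [inner3]
    simp only [PiLp.sub_apply]
    rw [hv0, hv1, hU1c.2.2, hW2c.1, hW2c.2.1, hW2c.2.2]
    norm_num
  -- IsProj (C3 t) U2 W3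
  have hpy : s^2 + c^2 = 1 := by rw [hs, hc]; exact Real.sin_sq_add_cos_sq (t k)
  have hd20 : (U2 - W3) 0 = c*K := by
    simp only [PiLp.sub_apply]; rw [hU2c.1, hW3c.1]; ring
  have hd21 : (U2 - W3) 1 = s*K := by
    simp only [PiLp.sub_apply]; rw [hU2c.2.1, hW3c.2.1]; ring
  have hd22 : (U2 - W3) 2 = 0 := by
    simp only [PiLp.sub_apply]; rw [hU2c.2.2, hW3c.2.2]; ring
  have hP3 : IsProj (C3 t) U2 W3 := by
    refine ⟨hW3mem, fun v hv => ?_⟩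
    have hRHS : (inner ℝ W3 (U2 - W3) : ℝ) = K := by
      rw [inner3, hd20, hd21, hd22, hW3c.1, hW3c.2.1, hW3c.2.2]
      linear_combination K * hpy
    have hgen : ∀ m, 1 ≤ m → (inner ℝ (pSeq t m) (U2 - W3) : ℝ) ≤ K := by
      intro m hm
      rw [inner3, hd20, hd21, hd22]
      have hp0 : pSeq t m 0 = Real.cos (t m) := by simp [pSeq]
      have hp1 : pSeq t m 1 = Real.sin (t m) := by simp [pSeq]
      rw [hp0, hp1]
      have hcos : Real.cos (t m) * c + Real.sin (t m) * s = Real.cos (t m - t k) := by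
        rw [Real.cos_sub, hc, hs]
      calc Real.cos (t m) * (c*K) + Real.sin (t m) * (s*K) + pSeq t m 2 * 0
          = K * (Real.cos (t m) * c + Real.sin (t m) * s) := by ring
        _ = K * Real.cos (t m - t k) := by rw [hcos]
        _ ≤ K * 1 := mul_le_mul_of_nonneg_left (Real.cos_le_one _) hK0
        _ = K := mul_one K
    have h1 := C3_halfspace t (U2 - W3) K hgen v hv
    have h2 : (inner ℝ (v - W3) (U2 - W3) : ℝ) = inner ℝ v (U2 - W3) - inner ℝ W3 (U2 - W3) :=
      inner_sub_left v W3 (U2 - W3)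
    rw [h2, hRHS]; linarith
  -- the remaining cycle equation
  have heq2 : U2 = U1 + ε • (W2 - U1) := by
    ext i
    fin_cases i
    · show U2 0 = U1 0 + ε * (W2 0 - U1 0)
      rw [hU2c.1, hW2c.1, hU1c.1, hU3c.1, hU2c.1, hεdef, hK]
      field_simp
      ring
    · show U2 1 = U1 1 + ε * (W2 1 - U1 1)
      rw [hU2c.2.1, hW2c.2.1, hU1c.2.1, hU3c.2.1, hU2c.2.1, hεdef, hK]
      field_simp
      ring
    · show U2 2 = U1 2 + ε * (W2 2 - U1 2)
      rw [hU2c.2.2, hW2c.2.2, hU1c.2.2]; ring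
  have hcycle : IsCycleWithSupport C1 C2 (C3 t) ε U1 U2 U3 W1 W2 W3 :=
    ⟨hP1, hP2, hP3, hU1, heq2, hU3⟩
  -- uniqueness
  have huniq : ∀ y₁ y₂ y₃ : E3, IsCycle C1 C2 (C3 t) ε y₁ y₂ y₃ →
      y₁ = U1 ∧ y₂ = U2 ∧ y₃ = U3 := by
    rintro y₁ y₂ y₃ ⟨x₁, x₂, x₃, hQ1, hQ2, hQ3, he1, he2, he3⟩
    have n1 : ‖U1 - y₁‖^2 ≤ ‖U3 - y₃‖^2 := by
      rw [hU1, he1]; exact step_le hε0 hε1 hP1 hQ1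
    have n2 : ‖U2 - y₂‖^2 ≤ ‖U1 - y₁‖^2 := by
      rw [heq2, he2]; exact step_le hε0 hε1 hP2 hQ2
    have n3 : ‖U3 - y₃‖^2 ≤ ‖U2 - y₂‖^2 := by
      rw [hU3, he3]; exact step_le hε0 hε1 hP3 hQ3
    have E1 : ‖U1 - y₁‖^2 = ‖U3 - y₃‖^2 := le_antisymm n1 (by linarith)
    have E2 : ‖U2 - y₂‖^2 = ‖U1 - y₁‖^2 := le_antisymm n2 (by linarith)
    have hw1 : W1 - x₁ = U3 - y₃ := by
      apply step_eq hε0 hε1 hP1 hQ1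
      rw [← hU1, ← he1]; exact E1
    have hw2 : W2 - x₂ = U1 - y₁ := by
      apply step_eq hε0 hε1 hP2 hQ2
      rw [← heq2, ← he2]; exact E2
    have hu1 : U1 - y₁ = U3 - y₃ := by
      rw [hU1, he1]
      calc (U3 + ε • (W1 - U3)) - (y₃ + ε • (x₁ - y₃))
          = (1-ε) • (U3 - y₃) + ε • (W1 - x₁) := by module
        _ = (1-ε) • (U3 - y₃) + ε • (U3 - y₃) := by rw [hw1]
        _ = U3 - y₃ := by module
    have hu2 : U2 - y₂ = U3 - y₃ := by
      rw [heq2, he2]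
      calc (U1 + ε • (W2 - U1)) - (y₁ + ε • (x₂ - y₁))
          = (1-ε) • (U1 - y₁) + ε • (W2 - x₂) := by module
        _ = (1-ε) • (U1 - y₁) + ε • (U1 - y₁) := by rw [hw2]
        _ = U1 - y₁ := by module
        _ = U3 - y₃ := hu1
    have E3' : ‖U3 - y₃‖^2 = ‖U2 - y₂‖^2 := by rw [hu2]
    have hw3 : W3 - x₃ = U2 - y₂ := by
      apply step_eq hε0 hε1 hP3 hQ3
      rw [← hU3, ← he3]; exact E3'
    have hx10 : x₁ 0 = -2 := mem_seg hQ1.1 (by simp) (by simp)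
    have hx11 : x₁ 1 = 2 := mem_seg hQ1.1 (by simp) (by simp)
    have he0 : (U3 - y₃) 0 = 0 := by
      rw [← hw1]; simp only [PiLp.sub_apply]; rw [hW1c.1, hx10]; ring
    have he1' : (U3 - y₃) 1 = 0 := by
      rw [← hw1]; simp only [PiLp.sub_apply]; rw [hW1c.2.1, hx11]; ring
    have hwu : W3 - x₃ = U3 - y₃ := by rw [hw3, hu2]
    have hx30 : x₃ 0 = Real.cos (t k) := by
      have h' : (W3 - x₃) 0 = (U3 - y₃) 0 := by rw [hwu]
      rw [he0] at h'
      simp only [PiLp.sub_apply] at h'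
      rw [hW3c.1] at h'
      rw [← hc]; linarith
    have hx31 : x₃ 1 = Real.sin (t k) := by
      have h' : (W3 - x₃) 1 = (U3 - y₃) 1 := by rw [hwu]
      rw [he1'] at h'
      simp only [PiLp.sub_apply] at h'
      rw [hW3c.2.1] at h'
      rw [← hs]; linarith
    have hx32 : x₃ 2 = z := by
      rw [hz]; exact fiber t ht hk hQ3.1 hx30 hx31
    have he2' : (U3 - y₃) 2 = 0 := by
      have h' : (W3 - x₃) 2 = (U3 - y₃) 2 := by rw [hwu]
      simp only [PiLp.sub_apply] at h' ⊢
      rw [hW3c.2.2, hx32] at h'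
      linarith
    have hez : U3 - y₃ = 0 := by
      ext i
      fin_cases i
      · simpa using he0
      · simpa using he1'
      · simpa using he2'
    have hy3 : y₃ = U3 := (sub_eq_zero.1 hez).symm
    have hy1 : y₁ = U1 := by
      have : U1 - y₁ = 0 := by rw [hu1, hez]
      exact (sub_eq_zero.1 this).symm
    have hy2 : y₂ = U2 := by
      have : U2 - y₂ = 0 := by rw [hu2, hez]
      exact (sub_eq_zero.1 this).symm
    exact ⟨hy1, hy2, hy3⟩
  constructor
  · refine ⟨(U1, U2, U3), ⟨W1, W2, W3, hcycle⟩, ?_⟩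
    rintro ⟨y₁, y₂, y₃⟩ hy
    obtain ⟨a1, a2, a3⟩ := huniq y₁ y₂ y₃ hy
    simp only [Prod.mk.injEq]
    exact ⟨a1, a2, a3⟩
  · intro u₁ u₂ u₃ hu
    obtain ⟨a1, a2, a3⟩ := huniq u₁ u₂ u₃ hu
    rw [a1, a2, a3]
    exact ⟨hU1c.2.2, hU2c.2.2, hU3c.2.2⟩

end Main
section Final

lemma F_lt {θ θ' : ℝ} (h1 : π/4 < θ) (h2 : θ < θ') (h3 : θ' < π/2) :
    2*Real.cos θ'/(Real.sin θ' + Real.cos θ') < 2*Real.cos θ/(Real.sin θ + Real.cos θ) := by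
  have hπ := Real.pi_pos
  have hc : 0 < Real.cos θ := Real.cos_pos_of_mem_Ioo ⟨by linarith, by linarith⟩
  have hc' : 0 < Real.cos θ' := Real.cos_pos_of_mem_Ioo ⟨by linarith, h3⟩
  have hs : 0 < Real.sin θ := Real.sin_pos_of_pos_of_lt_pi (by linarith) (by linarith)
  have hs' : 0 < Real.sin θ' := Real.sin_pos_of_pos_of_lt_pi (by linarith) (by linarith)
  have hd : 0 < Real.sin θ + Real.cos θ := by linarith
  have hd' : 0 < Real.sin θ' + Real.cos θ' := by linarith
  rw [div_lt_div_iff₀ hd' hd]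
  have hss : Real.sin (θ' - θ) = Real.sin θ' * Real.cos θ - Real.cos θ' * Real.sin θ :=
    Real.sin_sub θ' θ
  have hpos : 0 < Real.sin (θ' - θ) :=
    Real.sin_pos_of_pos_of_lt_pi (by linarith) (by linarith)
  nlinarith [hpos, hss]

lemma F_mem {θ : ℝ} (h1 : π/4 < θ) (h2 : θ < π/2) :
    2*Real.cos θ/(Real.sin θ + Real.cos θ) ∈ Set.Ioo (0:ℝ) 1 := by
  have hπ := Real.pi_pos
  have hc : 0 < Real.cos θ := Real.cos_pos_of_mem_Ioo ⟨by linarith, h2⟩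
  have hcs : Real.cos θ < Real.sin θ := by
    have h' : Real.sin (π/2 - θ) < Real.sin θ := by
      apply Real.strictMonoOn_sin ⟨by linarith, by linarith⟩ ⟨by linarith, by linarith⟩
      linarith
    rwa [Real.sin_pi_div_two_sub] at h'
  have hd : 0 < Real.sin θ + Real.cos θ := by linarith
  constructor
  · exact div_pos (by linarith) hd
  · rw [div_lt_one hd]; linarith

lemma F_tendsto (t : ℕ → ℝ) (ht : Admissible t) {g : ℕ → ℕ}
    (hg : Tendsto g atTop atTop) :
    Tendsto (fun j => 2*Real.cos (t (g j))/(Real.sin (t (g j)) + Real.cos (t (g j))))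
      atTop (nhds 0) := by
  have hsub : Tendsto (fun j => t (g j)) atTop (nhds (π/2)) := ht.2.2.comp hg
  have hcont : ContinuousAt (fun θ : ℝ => 2*Real.cos θ/(Real.sin θ + Real.cos θ)) (π/2) := by
    apply ContinuousAt.div
    · exact (continuous_const.mul Real.continuous_cos).continuousAt
    · exact (Real.continuous_sin.add Real.continuous_cos).continuousAt
    · simp
  have := hcont.tendsto.comp hsub
  simpa [Function.comp_def] using this

end Final
theorem stmt1 (t : ℕ → ℝ) (ht : Admissible t) :
    ∃ ε ε' : ℕ → ℝ, StrictAnti ε ∧ StrictAnti ε' ∧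
      (∀ j, ε j ∈ Set.Ioo (0 : ℝ) 1) ∧ (∀ j, ε' j ∈ Set.Ioo (0 : ℝ) 1) ∧
      Tendsto ε atTop (nhds 0) ∧ Tendsto ε' atTop (nhds 0) ∧
      (∀ j, (∃! u : E3 × E3 × E3, IsCycle C1 C2 (C3 t) (ε j) u.1 u.2.1 u.2.2) ∧
        ∀ u₁ u₂ u₃ : E3, IsCycle C1 C2 (C3 t) (ε j) u₁ u₂ u₃ →
          u₁ 2 = 1 ∧ u₂ 2 = 1 ∧ u₃ 2 = 1) ∧
      (∀ j, (∃! u : E3 × E3 × E3, IsCycle C1 C2 (C3 t) (ε' j) u.1 u.2.1 u.2.2) ∧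
        ∀ u₁ u₂ u₃ : E3, IsCycle C1 C2 (C3 t) (ε' j) u₁ u₂ u₃ →
          u₁ 2 = -1 ∧ u₂ 2 = -1 ∧ u₃ 2 = -1) := by
  refine ⟨fun j => 2*Real.cos (t (2*j+2))/(Real.sin (t (2*j+2)) + Real.cos (t (2*j+2))),
    fun j => 2*Real.cos (t (2*j+3))/(Real.sin (t (2*j+3)) + Real.cos (t (2*j+3))),
    ?_, ?_, ?_, ?_, ?_, ?_, ?_, ?_⟩
  · intro j j' h
    exact F_lt (t_gt t ht (by omega)) (ht.1 (Set.mem_Ici.2 (by omega)) (Set.mem_Ici.2 (by omega)) (by omega))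
      (t_lt t ht (by omega))
  · intro j j' h
    exact F_lt (t_gt t ht (by omega)) (ht.1 (Set.mem_Ici.2 (by omega)) (Set.mem_Ici.2 (by omega)) (by omega))
      (t_lt t ht (by omega))
  · intro j
    exact F_mem (t_gt t ht (by omega)) (t_lt t ht (by omega))
  · intro j
    exact F_mem (t_gt t ht (by omega)) (t_lt t ht (by omega))
  · exact F_tendsto t ht (tendsto_atTop_mono (fun j => by omega : ∀ j : ℕ, j ≤ 2*j+2) tendsto_id)
  · exact F_tendsto t ht (tendsto_atTop_mono (fun j => by omega : ∀ j : ℕ, j ≤ 2*j+3) tendsto_id)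
  · intro j
    obtain ⟨hex, hall⟩ := main_cycle t ht (k := 2*j+2) (by omega) rfl
    refine ⟨hex, fun u₁ u₂ u₃ hu => ?_⟩
    obtain ⟨a1, a2, a3⟩ := hall u₁ u₂ u₃ hu
    have hpow : ((-1:ℝ))^(2*j+2) = 1 := Even.neg_one_pow ⟨j+1, by ring⟩
    rw [hpow] at a1 a2 a3
    exact ⟨a1, a2, a3⟩
  · intro j
    obtain ⟨hex, hall⟩ := main_cycle t ht (k := 2*j+3) (by omega) rfl
    refine ⟨hex, fun u₁ u₂ u₃ hu => ?_⟩
    obtain ⟨a1, a2, a3⟩ := hall u₁ u₂ u₃ hu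
    have hpow : ((-1:ℝ))^(2*j+3) = -1 := Odd.neg_one_pow ⟨j+1, by ring⟩
    rw [hpow] at a1 a2 a3
    exact ⟨a1, a2, a3⟩
end
end

section
/- Let ε ∈ (0,1) and let (u₁',u₂',u₃') be an ε-cycle for the projected sets (C₁',C₂',C₃') in ℝ² with support (w₁',w₂',w₃'). Then there exists z ∈ [−1,1] such that the lifted triple ((u₁',z),(u₂',z),(u₃',z)) in ℝ³ is an ε-cycle for (C₁,C₂,C₃) with support ((w₁',z),(w₂',z),(w₃',z)). -/
noncomputable section
open Real Filter

/-- The projection onto the first two coordinates, as a linear map. -/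
def projL : E3 →ₗ[ℝ] E2 where
  toFun x := !₂[x 0, x 1]
  map_add' x y := by ext i; fin_cases i <;> simp [PiLp.add_apply]
  map_smul' c x := by ext i; fin_cases i <;> simp [PiLp.smul_apply]

/-- The last coordinate, as a linear map. -/
def ev2L : E3 →ₗ[ℝ] ℝ where
  toFun x := x 2
  map_add' x y := by simp [PiLp.add_apply]
  map_smul' c x := by simp [PiLp.smul_apply]

lemma projXY_eq_projL (x : E3) : projXY x = projL x := rfl

lemma inner_lift (v : E3) (w u : E2) (z : ℝ) :
    (inner ℝ (v - liftZ w z) (liftZ u z - liftZ w z) : ℝ) = inner ℝ (projXY v - w) (u - w) := by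
  simp [liftZ, projXY, PiLp.inner_apply, Fin.sum_univ_three, Fin.sum_univ_two,
    PiLp.sub_apply, RCLike.inner_apply, conj_trivial]

lemma projXY_pSeq (t : ℕ → ℝ) (k : ℕ) : projXY (pSeq t k) = vSeq t k := by
  ext i; fin_cases i <;> simp [projXY, pSeq, vSeq]

lemma projXY_image_C3 (t : ℕ → ℝ) : projXY '' C3 t ⊆ C3' t := by
  intro y hy
  obtain ⟨x, hx, rfl⟩ := hy
  rw [projXY_eq_projL]
  have hcont : Continuous projL := projL.continuous_of_finiteDimensional
  have h1 : projL x ∈ closure (projL '' convexHull ℝ (pSeq t '' {k | 1 ≤ k})) :=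
    (hcont.continuousOn.image_closure (Set.mem_image_of_mem _ hx) : _)
  rw [projL.image_convexHull, Set.image_image] at h1
  have himg : (fun k => projL (pSeq t k)) '' {k | 1 ≤ k} = vSeq t '' {k | 1 ≤ k} :=
    Set.image_congr fun k _ => by rw [← projXY_eq_projL, projXY_pSeq]
  rw [himg] at h1
  exact h1

lemma liftZ_cycle (ε : ℝ) (p q r : E2) (z : ℝ) (h : p = q + ε • (r - q)) :
    liftZ p z = liftZ q z + ε • (liftZ r z - liftZ q z) := by
  ext i
  have h0 := congrArg (fun f : E2 => f 0) h
  have h1 := congrArg (fun f : E2 => f 1) h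
  simp only [PiLp.add_apply, PiLp.smul_apply, PiLp.sub_apply, smul_eq_mul] at h0 h1
  fin_cases i <;>
    simp [liftZ, PiLp.add_apply, PiLp.smul_apply, PiLp.sub_apply, h0, h1]

lemma C3_bounded (t : ℕ → ℝ) : Bornology.IsBounded (C3 t) := by
  refine Bornology.IsBounded.closure ?_
  rw [isBounded_convexHull]
  rw [isBounded_iff_forall_norm_le]
  refine ⟨2, ?_⟩
  rintro y ⟨k, hk, rfl⟩
  rw [EuclideanSpace.norm_eq]
  have h1 : ((-1 : ℝ) ^ k) ^ 2 = 1 := by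
    rw [← pow_mul, mul_comm, pow_mul, neg_one_sq, one_pow]
  have h2 : Real.cos (t k) ^ 2 + Real.sin (t k) ^ 2 = 1 := by
    rw [add_comm]; exact Real.sin_sq_add_cos_sq (t k)
  have : √(Real.cos (t k) ^ 2 + Real.sin (t k) ^ 2 + ((-1:ℝ)^k) ^ 2) ≤ 2 := by
    rw [h1, h2]
    rw [show (2 : ℝ) = √4 by rw [show (4:ℝ) = 2^2 by norm_num, Real.sqrt_sq]; norm_num]
    exact Real.sqrt_le_sqrt (by norm_num)
  simpa [pSeq, Fin.sum_univ_three, sq_abs] using this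

lemma C3_z_bound (t : ℕ → ℝ) : C3 t ⊆ {x : E3 | x 2 ∈ Set.Icc (-1:ℝ) 1} := by
  have hcl : IsClosed {x : E3 | x 2 ∈ Set.Icc (-1:ℝ) 1} :=
    IsClosed.preimage ev2L.continuous_of_finiteDimensional isClosed_Icc
  have hcv : Convex ℝ {x : E3 | x 2 ∈ Set.Icc (-1:ℝ) 1} :=
    (convex_Icc (-1:ℝ) 1).linear_preimage ev2L
  refine closure_minimal (convexHull_min ?_ hcv) hcl
  rintro y ⟨k, hk, rfl⟩
  rcases Nat.even_or_odd k with hpar | hpar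
  · simp [pSeq, hpar.neg_one_pow]
  · simp [pSeq, hpar.neg_one_pow]

lemma projXY_mem_C1 (v : E3) (hv : v ∈ C1) : projXY v = aPt := by
  rw [C1, convexHull_pair] at hv
  obtain ⟨s, r, hs, hr, hsr, rfl⟩ := hv
  ext i
  fin_cases i <;>
    simp [projXY, aPt, PiLp.add_apply, PiLp.smul_apply] <;> linarith

lemma projXY_mem_C2 (v : E3) (hv : v ∈ C2) : projXY v = bPt := by
  rw [C2, convexHull_pair] at hv
  obtain ⟨s, r, hs, hr, hsr, rfl⟩ := hv
  ext i
  fin_cases i <;>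
    simp [projXY, bPt, PiLp.add_apply, PiLp.smul_apply] <;> linarith

lemma lift_mem_C1 (z : ℝ) (hz : z ∈ Set.Icc (-1:ℝ) 1) : liftZ aPt z ∈ C1 := by
  rw [C1, convexHull_pair]
  refine ⟨(1+z)/2, (1-z)/2, by linarith [hz.1], by linarith [hz.2], by ring, ?_⟩
  ext i
  fin_cases i <;>
    simp [liftZ, aPt, PiLp.add_apply, PiLp.smul_apply] <;> ring

lemma lift_mem_C2 (z : ℝ) (hz : z ∈ Set.Icc (-1:ℝ) 1) : liftZ bPt z ∈ C2 := by
  rw [C2, convexHull_pair]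
  refine ⟨(1+z)/2, (1-z)/2, by linarith [hz.1], by linarith [hz.2], by ring, ?_⟩
  ext i
  fin_cases i <;>
    simp [liftZ, bPt, PiLp.add_apply, PiLp.smul_apply] <;> ring

theorem stmt4 (t : ℕ → ℝ) (ht : Admissible t) (ε : ℝ) (hε : ε ∈ Set.Ioo (0 : ℝ) 1)
    (u₁' u₂' u₃' w₁' w₂' w₃' : E2)
    (hc : IsCycleWithSupport C1' C2' (C3' t) ε u₁' u₂' u₃' w₁' w₂' w₃') :
    ∃ z ∈ Set.Icc (-1 : ℝ) 1, IsCycleWithSupport C1 C2 (C3 t) ε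
      (liftZ u₁' z) (liftZ u₂' z) (liftZ u₃' z)
      (liftZ w₁' z) (liftZ w₂' z) (liftZ w₃' z) := by
  obtain ⟨⟨hw₁mem, hproj1⟩, ⟨hw₂mem, hproj2⟩, ⟨hw₃mem, hproj3⟩, he₁, he₂, he₃⟩ := hc
  have hw₁ : w₁' = aPt := hw₁mem
  have hw₂ : w₂' = bPt := hw₂mem
  -- C3' t ⊆ projXY '' C3 t
  have hC3c : IsCompact (C3 t) :=
    Metric.isCompact_of_isClosed_isBounded isClosed_closure (C3_bounded t)
  have hsub : C3' t ⊆ projXY '' C3 t := by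
    have himgc : IsCompact (projXY '' C3 t) := by
      rw [show projXY '' C3 t = projL '' C3 t from Set.image_congr fun x _ => projXY_eq_projL x]
      exact hC3c.image projL.continuous_of_finiteDimensional
    have hconv : Convex ℝ (projXY '' C3 t) := by
      rw [show projXY '' C3 t = projL '' C3 t from Set.image_congr fun x _ => projXY_eq_projL x]
      exact ((convex_convexHull ℝ _).closure).linear_image projL
    refine closure_minimal (convexHull_min ?_ hconv) himgc.isClosed
    rintro y ⟨k, hk, rfl⟩
    exact ⟨pSeq t k, subset_closure (subset_convexHull ℝ _ ⟨k, hk, rfl⟩), projXY_pSeq t k⟩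
  obtain ⟨x, hxC3, hxproj⟩ := hsub hw₃mem
  set z : ℝ := x 2 with hzdef
  have hzIcc : z ∈ Set.Icc (-1:ℝ) 1 := C3_z_bound t hxC3
  have hlift : liftZ w₃' z = x := by
    have h0 := congrArg (fun f : E2 => f 0) hxproj
    have h1 := congrArg (fun f : E2 => f 1) hxproj
    simp [projXY] at h0 h1
    ext i
    fin_cases i <;> simp [liftZ, ← h0, ← h1, hzdef]
  refine ⟨z, hzIcc, ?_, ?_, ?_, liftZ_cycle ε _ _ _ z he₁, liftZ_cycle ε _ _ _ z he₂,
    liftZ_cycle ε _ _ _ z he₃⟩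
  · refine ⟨hw₁ ▸ lift_mem_C1 z hzIcc, fun v hv => ?_⟩
    rw [inner_lift]
    exact hproj1 (projXY v) (projXY_mem_C1 v hv)
  · refine ⟨hw₂ ▸ lift_mem_C2 z hzIcc, fun v hv => ?_⟩
    rw [inner_lift]
    exact hproj2 (projXY v) (projXY_mem_C2 v hv)
  · refine ⟨hlift ▸ hxC3, fun v hv => ?_⟩
    rw [inner_lift]
    exact hproj3 (projXY v) (projXY_image_C3 t (Set.mem_image_of_mem _ hv))
end
end

section
/- For each ε ∈ (0,1) there exists exactly one ε-cycle (u₁',u₂',u₃') for the projected sets (C₁',C₂',C₃') in ℝ². -/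
noncomputable section
open Real Filter

lemma projExists {E : Type} [NormedAddCommGroup E] [InnerProductSpace ℝ E] [CompleteSpace E]
    {C : Set E} (hne : C.Nonempty) (hcl : IsClosed C) (hconv : Convex ℝ C) (u : E) :
    ∃ w, IsProj C u w := by
  obtain ⟨v, hvC, hv⟩ := exists_norm_eq_iInf_of_complete_convex hne hcl.isComplete hconv u
  refine ⟨v, hvC, fun w hw => ?_⟩
  have := (norm_eq_iInf_iff_real_inner_le_zero hconv hvC).1 hv w hw
  rwa [real_inner_comm] at this

lemma projUnique {E : Type} [NormedAddCommGroup E] [InnerProductSpace ℝ E]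
    {C : Set E} {u w w' : E} (h : IsProj C u w) (h' : IsProj C u w') : w = w' := by
  have h1 := h.2 w' h'.1
  have h2 := h'.2 w h.1
  have e1 : (inner ℝ (w' - w) (w' - w) : ℝ) = inner ℝ (w' - w) (u - w) - inner ℝ (w' - w) (u - w') := by
    rw [← inner_sub_right]; congr 1; abel
  have e2 : (inner ℝ (w - w') (u - w') : ℝ) = - inner ℝ (w' - w) (u - w') := by
    rw [show w - w' = -(w' - w) by abel, inner_neg_left]
  have key : (inner ℝ (w' - w) (w' - w) : ℝ) ≤ 0 := by
    rw [e2] at h2; linarith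
  have h3 := real_inner_self_nonneg (x := w' - w)
  have h4 : (inner ℝ (w' - w) (w' - w) : ℝ) = 0 := le_antisymm key h3
  have h5 : w' - w = 0 := inner_self_eq_zero.mp h4
  exact (sub_eq_zero.mp h5).symm

lemma projNonexp {E : Type} [NormedAddCommGroup E] [InnerProductSpace ℝ E]
    {C : Set E} {x y wx wy : E} (hx : IsProj C x wx) (hy : IsProj C y wy) :
    ‖wx - wy‖ ≤ ‖x - y‖ := by
  have h1 := hx.2 wy hy.1
  have h2 := hy.2 wx hx.1
  have k1 : (0 : ℝ) ≤ inner ℝ (wx - wy) (x - wx) := by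
    rw [show wy - wx = -(wx - wy) by abel, inner_neg_left] at h1; linarith
  have k2 : (inner ℝ (wx - wy) (y - wy) : ℝ) ≤ 0 := h2
  have k3 : (inner ℝ (wx - wy) (x - y) : ℝ)
      = inner ℝ (wx - wy) (x - wx) - inner ℝ (wx - wy) (y - wy) + inner ℝ (wx - wy) (wx - wy) := by
    rw [← inner_sub_right, ← inner_add_right]; congr 1; abel
  have k4 : ‖wx - wy‖ ^ 2 ≤ (inner ℝ (wx - wy) (x - y) : ℝ) := by
    rw [k3, ← real_inner_self_eq_norm_sq]; linarith
  have k5 : (inner ℝ (wx - wy) (x - y) : ℝ) ≤ ‖wx - wy‖ * ‖x - y‖ := real_inner_le_norm _ _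
  nlinarith [norm_nonneg (wx - wy), norm_nonneg (x - y)]

lemma keyCycle {E : Type} [NormedAddCommGroup E] [InnerProductSpace ℝ E] [CompleteSpace E]
    (a b : E) {C : Set E} (hne : C.Nonempty) (hcl : IsClosed C) (hconv : Convex ℝ C)
    {ε : ℝ} (hε : ε ∈ Set.Ioo (0 : ℝ) 1) :
    ∃! u : E × E × E, IsCycle {a} {b} C ε u.1 u.2.1 u.2.2 := by
  obtain ⟨hε0, hε1⟩ := hε
  choose P hP using fun x => projExists hne hcl hconv x
  set F : E → E := fun x => (1-ε) • ((1-ε) • ((1-ε) • x + ε • P x) + ε • a) + ε • b with hF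
  have hPnon : ∀ x y : E, ‖P x - P y‖ ≤ ‖x - y‖ := fun x y => projNonexp (hP x) (hP y)
  have hKnn : (0 : ℝ) ≤ (1-ε)^2 := sq_nonneg _
  have hlip : ∀ x y : E, dist (F x) (F y) ≤ (1-ε)^2 * dist x y := by
    intro x y
    have hFx : F x = (1-ε) • ((1-ε) • ((1-ε) • x + ε • P x) + ε • a) + ε • b := rfl
    have hFy : F y = (1-ε) • ((1-ε) • ((1-ε) • y + ε • P y) + ε • a) + ε • b := rfl
    rw [dist_eq_norm, dist_eq_norm, hFx, hFy]
    have e0 : (1-ε) • ((1-ε) • ((1-ε) • x + ε • P x) + ε • a) + ε • b -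
        ((1-ε) • ((1-ε) • ((1-ε) • y + ε • P y) + ε • a) + ε • b)
        = ((1-ε)^2) • ((1-ε) • (x - y) + ε • (P x - P y)) := by module
    rw [e0]
    have h1 : ‖(1-ε) • (x - y) + ε • (P x - P y)‖ ≤ ‖x - y‖ := by
      calc ‖(1-ε) • (x - y) + ε • (P x - P y)‖
          ≤ ‖(1-ε) • (x - y)‖ + ‖ε • (P x - P y)‖ := norm_add_le _ _
        _ = (1-ε) * ‖x - y‖ + ε * ‖P x - P y‖ := by
            rw [norm_smul, norm_smul, Real.norm_eq_abs, Real.norm_eq_abs,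
              abs_of_nonneg (by linarith : (0:ℝ) ≤ 1 - ε), abs_of_nonneg hε0.le]
        _ ≤ (1-ε) * ‖x - y‖ + ε * ‖x - y‖ := by
            have := hPnon x y; nlinarith
        _ = ‖x - y‖ := by ring
    calc ‖((1-ε)^2) • ((1-ε) • (x - y) + ε • (P x - P y))‖
        = (1-ε)^2 * ‖(1-ε) • (x - y) + ε • (P x - P y)‖ := by
          rw [norm_smul, Real.norm_eq_abs, abs_of_nonneg hKnn]
      _ ≤ (1-ε)^2 * ‖x - y‖ := by nlinarith
  have hcontr : ContractingWith ⟨(1-ε)^2, hKnn⟩ F := by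
    constructor
    · show ((1-ε)^2 : ℝ) < 1
      nlinarith
    · exact LipschitzWith.of_dist_le_mul hlip
  haveI : Nonempty E := ⟨a⟩
  set x₀ := ContractingWith.fixedPoint F hcontr with hx₀
  have hfix : F x₀ = x₀ := hcontr.fixedPoint_isFixedPt
  set u₃ : E := (1-ε) • x₀ + ε • P x₀ with hu₃
  set u₁ : E := (1-ε) • u₃ + ε • a with hu₁
  have projA : ∀ z : E, IsProj {a} z a :=
    fun z => ⟨rfl, fun v hv => by simp only [Set.mem_singleton_iff] at hv; simp [hv]⟩
  have projB : ∀ z : E, IsProj {b} z b :=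
    fun z => ⟨rfl, fun v hv => by simp only [Set.mem_singleton_iff] at hv; simp [hv]⟩
  refine ⟨(u₁, x₀, u₃), ⟨a, b, P x₀, projA u₃, projB u₁, hP x₀, ?_, ?_, ?_⟩, ?_⟩
  · rw [hu₁]; module
  · have hFx₀ : F x₀ = (1-ε) • ((1-ε) • ((1-ε) • x₀ + ε • P x₀) + ε • a) + ε • b := rfl
    calc x₀ = F x₀ := hfix.symm
      _ = u₁ + ε • (b - u₁) := by rw [hFx₀, hu₁, hu₃]; module
  · rw [hu₃]; module
  · rintro ⟨y₁, y₂, y₃⟩ ⟨w₁, w₂, w₃, hp1, hp2, hp3, e1, e2, e3⟩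
    have hw₁ : w₁ = a := Set.mem_singleton_iff.mp hp1.1
    have hw₂ : w₂ = b := Set.mem_singleton_iff.mp hp2.1
    have hw₃ : w₃ = P y₂ := projUnique hp3 (hP y₂)
    dsimp only at e1 e2 e3
    rw [hw₁] at e1
    rw [hw₂] at e2
    rw [hw₃] at e3
    have g3 : (1-ε) • y₂ + ε • P y₂ = y₃ := by rw [e3]; module
    have g1 : (1-ε) • y₃ + ε • a = y₁ := by rw [e1]; module
    have g2 : (1-ε) • y₁ + ε • b = y₂ := by rw [e2]; module
    have hyfix : F y₂ = y₂ := by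
      show (1-ε) • ((1-ε) • ((1-ε) • y₂ + ε • P y₂) + ε • a) + ε • b = y₂
      rw [g3, g1, g2]
    have hy₂ : y₂ = x₀ := hcontr.fixedPoint_unique hyfix
    have hy₃ : y₃ = u₃ := by rw [← g3, hy₂, hu₃]
    have hy₁ : y₁ = u₁ := by rw [← g1, hy₃, hu₁]
    simp only [Prod.mk.injEq]
    exact ⟨hy₁, hy₂, hy₃⟩

theorem stmt5 (t : ℕ → ℝ) (ht : Admissible t) (ε : ℝ) (hε : ε ∈ Set.Ioo (0 : ℝ) 1) :
    ∃! u : E2 × E2 × E2, IsCycle C1' C2' (C3' t) ε u.1 u.2.1 u.2.2 := by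
  have hne : (C3' t).Nonempty :=
    ⟨vSeq t 1, subset_closure (subset_convexHull ℝ _ ⟨1, by norm_num, rfl⟩)⟩
  have hcl : IsClosed (C3' t) := isClosed_closure
  have hconv : Convex ℝ (C3' t) := (convex_convexHull ℝ _).closure
  exact keyCycle aPt bPt hne hcl hconv hε
end
end
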